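/- 𝔭 = min{𝔭*, 𝔱}. -/

import Mathlib

open Set

/-- `A ⊆* B`: `A ∖ B` is finite. -/
def SubStar (A B : Set ℕ) : Prop := (A \ B).Finite

/-- A family of sets of naturals is centered if each of its finite nonempty subfamilies has
infinite intersection. -/
def Centered (F : Set (Set ℕ)) : Prop :=
  ∀ G ⊆ F, G.Finite → G.Nonempty → (⋂₀ G).Infinite

/-- `F` has a pseudo-intersection: an infinite set almost contained in every member. -/
def HasPseudoIntersection (F : Set (Set ℕ)) : Prop :=
  ∃ A : Set ℕ, A.Infinite ∧ ∀ B ∈ F, SubStar A B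

/-- The pseudo-intersection number `𝔭`. -/
noncomputable def pCard : Cardinal :=
  sInf { c : Cardinal | ∃ F : Set (Set ℕ), (∀ A ∈ F, A.Infinite) ∧ Centered F ∧
    ¬ HasPseudoIntersection F ∧ Cardinal.mk F = c }

/-- The tower number `𝔱`. -/
noncomputable def tCard : Cardinal :=
  sInf { c : Cardinal | ∃ F : Set (Set ℕ), (∀ A ∈ F, A.Infinite) ∧
    (∀ A ∈ F, ∀ B ∈ F, SubStar A B ∨ SubStar B A) ∧
    ¬ HasPseudoIntersection F ∧ Cardinal.mk F = c }

/-- `Y` is linearly refinable: each `y ∈ Y` has an infinite subset `ŷ ⊆ y` such that the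
family of all the `ŷ`'s is linearly quasi-ordered by `⊆*`. -/
def LinearlyRefinable (Y : Set (Set ℕ)) : Prop :=
  ∃ r : Set ℕ → Set ℕ, (∀ y ∈ Y, (r y).Infinite ∧ r y ⊆ y) ∧
    ∀ y ∈ Y, ∀ z ∈ Y, SubStar (r y) (r z) ∨ SubStar (r z) (r y)

/-- The cardinal `𝔭*`: the minimal cardinality of a centered family of infinite sets of
naturals which is not linearly refinable. -/
noncomputable def pStarCard : Cardinal :=
  sInf { c : Cardinal | ∃ Y : Set (Set ℕ), (∀ A ∈ Y, A.Infinite) ∧ Centered Y ∧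
    ¬ LinearlyRefinable Y ∧ Cardinal.mk Y = c }

-- basic SubStar lemmas
lemma subStar_refl (A : Set ℕ) : SubStar A A := by simp [SubStar]

lemma subStar_of_subset {A B : Set ℕ} (h : A ⊆ B) : SubStar A B := by
  have : A \ B = ∅ := diff_eq_empty.2 h
  simp [SubStar, this]

lemma subStar_trans {A B C : Set ℕ} (h1 : SubStar A B) (h2 : SubStar B C) : SubStar A C := by
  refine (h1.union h2).subset ?_
  intro x hx
  by_cases hb : x ∈ B
  · exact Or.inr ⟨hb, hx.2⟩
  · exact Or.inl ⟨hx.1, hb⟩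

-- minimal element of a finite comparable family
lemma exists_min_subStar (G : Set (Set ℕ)) (hfin : G.Finite) (hne : G.Nonempty)
    (htot : ∀ A ∈ G, ∀ B ∈ G, SubStar A B ∨ SubStar B A) :
    ∃ A ∈ G, ∀ B ∈ G, SubStar A B := by
  refine Set.Finite.induction_on G hfin
    (motive := fun t _ => t.Nonempty → (∀ A ∈ t, ∀ B ∈ t, SubStar A B ∨ SubStar B A) →
      ∃ A ∈ t, ∀ B ∈ t, SubStar A B) ?_ ?_ hne htot
  · exact fun hne _ => absurd hne (by simp)
  · intro x s hx hs ih hne htot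
    by_cases hsne : s.Nonempty
    · obtain ⟨A, hA, hmin⟩ := ih hsne (fun a ha b hb => htot a (Or.inr ha) b (Or.inr hb))
      rcases htot A (Or.inr hA) x (Or.inl rfl) with h | h
      · refine ⟨A, Or.inr hA, ?_⟩
        rintro B (rfl | hB)
        · exact h
        · exact hmin B hB
      · refine ⟨x, Or.inl rfl, ?_⟩
        rintro B (rfl | hB)
        · exact subStar_refl _
        · exact subStar_trans h (hmin B hB)
    · rw [Set.not_nonempty_iff_eq_empty] at hsne
      subst hsne
      refine ⟨x, Or.inl rfl, ?_⟩
      rintro B (rfl | hB)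
      · exact subStar_refl _
      · exact absurd hB (Set.notMem_empty B)

lemma centered_of_linear (F : Set (Set ℕ)) (hinf : ∀ A ∈ F, A.Infinite)
    (hlin : ∀ A ∈ F, ∀ B ∈ F, SubStar A B ∨ SubStar B A) : Centered F := by
  intro G hGF hGfin hGne
  obtain ⟨A, hAG, hmin⟩ := exists_min_subStar G hGfin hGne
    (fun a ha b hb => hlin a (hGF ha) b (hGF hb))
  have h1 : (A \ ⋂₀ G).Finite := by
    refine (Set.Finite.biUnion hGfin (fun B hB => hmin B hB)).subset ?_
    intro x hx
    obtain ⟨B, hB, hxB⟩ := by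
      have := hx.2
      rw [Set.mem_sInter] at this
      push_neg at this
      exact this
    exact Set.mem_biUnion hB ⟨hx.1, hxB⟩
  refine ((hinf A (hGF hAG)).diff h1).mono ?_
  intro x hx
  by_contra hc
  exact hx.2 ⟨hx.1, hc⟩

-- splitting an infinite set
lemma exists_split {A : Set ℕ} (hA : A.Infinite) :
    ∃ B ⊆ A, B.Infinite ∧ (A \ B).Infinite := by
  let f := hA.natEmbedding
  refine ⟨Set.range (fun n => (f (2 * n) : ℕ)), ?_, ?_, ?_⟩
  · rintro x ⟨n, rfl⟩; exact (f (2 * n)).2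
  · refine infinite_of_injective_forall_mem (f := fun n => (f (2 * n) : ℕ)) ?_ (fun n => ⟨n, rfl⟩)
    intro a b hab
    have := f.injective (Subtype.ext hab)
    omega
  · refine infinite_of_injective_forall_mem (f := fun n => (f (2 * n + 1) : ℕ)) ?_ ?_
    · intro a b hab
      have := f.injective (Subtype.ext hab)
      omega
    · intro n
      refine ⟨(f (2 * n + 1)).2, ?_⟩
      rintro ⟨m, hm⟩
      have := f.injective (Subtype.ext hm.symm)
      omega

-- diagonalization
lemma exists_diagonal (c : ℕ → Set ℕ)
    (h : ∀ n, (⋂ i ∈ Finset.range (n + 1), c i).Infinite) :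
    ∃ A : Set ℕ, A.Infinite ∧ ∀ n, (A \ c n).Finite := by
  set d : ℕ → Set ℕ := fun n => ⋂ i ∈ Finset.range (n + 1), c i with hd
  have hdc : ∀ {m n : ℕ}, n ≤ m → d m ⊆ c n := by
    intro m n hnm x hx
    simp only [hd, Set.mem_iInter] at hx
    exact hx n (Finset.mem_range.2 (by omega))
  have hstep : ∀ n (a : ℕ), ∃ b ∈ d n, a < b := by
    intro n a
    obtain ⟨b, hb⟩ := ((h n).diff (Set.finite_Iic a)).nonempty
    exact ⟨b, hb.1, by simpa using hb.2⟩
  choose g hg1 hg2 using hstep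
  let a : ℕ → ℕ := fun n => Nat.rec (g 0 0) (fun n prev => g (n + 1) prev) n
  have ha_mem : ∀ n, a n ∈ d n := by
    intro n; cases n with
    | zero => exact hg1 0 0
    | succ n => exact hg1 (n + 1) _
  have ha_lt : ∀ n, a n < a (n + 1) := fun n => hg2 (n + 1) (a n)
  have hmono : StrictMono a := strictMono_nat_of_lt_succ ha_lt
  refine ⟨Set.range a, infinite_of_injective_forall_mem hmono.injective (fun n => ⟨n, rfl⟩), ?_⟩
  intro n
  refine ((Set.finite_Iio n).image a).subset ?_
  rintro x ⟨⟨m, rfl⟩, hx⟩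
  refine ⟨m, ?_, rfl⟩
  simp only [Set.mem_Iio]
  by_contra hmn
  exact hx (hdc (by omega) (ha_mem m))

-- pseudo-intersection gives refinability
lemma linearlyRefinable_of_psi {Y : Set (Set ℕ)} (h : HasPseudoIntersection Y) :
    LinearlyRefinable Y := by
  obtain ⟨A, hAinf, hA⟩ := h
  refine ⟨fun y => y ∩ A, ?_, ?_⟩
  · intro y hy
    refine ⟨?_, Set.inter_subset_left⟩
    refine (hAinf.diff (hA y hy)).mono ?_
    intro x hx; exact ⟨by by_contra hc; exact hx.2 ⟨hx.1, hc⟩, hx.1⟩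
  · intro y hy z hz
    left
    refine (hA z hz).subset ?_
    intro x hx
    exact ⟨hx.1.2, fun hc => hx.2 ⟨hc, hx.1.2⟩⟩

-- tower existence via Zorn
lemma exists_tower : ∃ T : Set (Set ℕ), (∀ A ∈ T, A.Infinite) ∧
    (∀ A ∈ T, ∀ B ∈ T, SubStar A B ∨ SubStar B A) ∧ ¬ HasPseudoIntersection T := by
  set S : Set (Set (Set ℕ)) := {T | (∀ A ∈ T, A.Infinite) ∧
    ∀ A ∈ T, ∀ B ∈ T, SubStar A B ∨ SubStar B A} with hS
  have hub : ∀ c ⊆ S, IsChain (fun x1 x2 => x1 ⊆ x2) c → ∃ ub ∈ S, ∀ s ∈ c, s ⊆ ub := by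
    intro c hcS hchain
    refine ⟨⋃₀ c, ⟨?_, ?_⟩, fun s hs => Set.subset_sUnion_of_mem hs⟩
    · rintro A ⟨T, hT, hAT⟩
      exact (hcS hT).1 A hAT
    · rintro A ⟨T1, hT1, hA⟩ B ⟨T2, hT2, hB⟩
      rcases hchain.total hT1 hT2 with h | h
      · exact (hcS hT2).2 A (h hA) B hB
      · exact (hcS hT1).2 A hA B (h hB)
  obtain ⟨M, hM⟩ := zorn_subset S hub
  · obtain ⟨hMS, hMmax⟩ := hM
    refine ⟨M, hMS.1, hMS.2, ?_⟩
    rintro ⟨A, hAinf, hA⟩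
    obtain ⟨B, hBA, hBinf, hABinf⟩ := exists_split hAinf
    have hBsub : ∀ C ∈ M, SubStar B C := by
      intro C hC
      exact (hA C hC).subset (fun x hx => ⟨hBA hx.1, hx.2⟩)
    have hins : insert B M ∈ S := by
      constructor
      · rintro C (rfl | hC)
        · exact hBinf
        · exact hMS.1 C hC
      · rintro C (rfl | hC) D (rfl | hD)
        · exact Or.inl (subStar_refl _)
        · exact Or.inl (hBsub D hD)
        · exact Or.inr (hBsub C hC)
        · exact hMS.2 C hC D hD
    have hBM : B ∈ M := by
      have := hMmax hins (Set.subset_insert B M)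
      exact this (Set.mem_insert B M)
    exact hABinf (hA B hBM)

-- the partition
def Pm (m : ℕ) : Set ℕ := {x | (Nat.unpair x).1 = m}
def Xn (n : ℕ) : Set ℕ := {x | n ≤ (Nat.unpair x).1}
def Idl : Set (Set ℕ) := {Y | ∀ m, (Y ∩ Pm m).Finite}

lemma Pm_infinite (m : ℕ) : (Pm m).Infinite := by
  refine infinite_of_injective_forall_mem (f := fun k => Nat.pair m k) ?_ ?_
  · intro a b hab
    exact (Nat.pair_eq_pair.1 hab).2
  · intro k
    simp [Pm, Nat.unpair_pair]

lemma Pm_subset_Xn (m : ℕ) : Pm m ⊆ Xn m := fun x hx => le_of_eq hx.symm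

lemma Xn_antitone {n m : ℕ} (h : n ≤ m) : Xn m ⊆ Xn n := fun x hx => le_trans h hx

lemma empty_mem_Idl : ∅ ∈ Idl := fun m => by simp

lemma Idl_union {Y Z : Set ℕ} (hY : Y ∈ Idl) (hZ : Z ∈ Idl) : Y ∪ Z ∈ Idl := by
  intro m
  refine ((hY m).union (hZ m)).subset ?_
  rw [Set.union_inter_distrib_right]

lemma Idl_of_finite {Y : Set ℕ} (hY : Y.Finite) : Y ∈ Idl :=
  fun m => hY.subset Set.inter_subset_left

lemma core_infinite (n : ℕ) {Y : Set ℕ} (hY : Y ∈ Idl) : (Xn n \ Y).Infinite := by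
  refine ((Pm_infinite n).diff (hY n)).mono ?_
  intro x hx
  exact ⟨Pm_subset_Xn n hx.1, fun hc => hx.2 ⟨hc, hx.1⟩⟩

noncomputable def myF : Filter ℕ where
  sets := {S | ∃ n, ∃ Y ∈ Idl, Xn n \ Y ⊆ S}
  univ_sets := ⟨0, ∅, empty_mem_Idl, by simp⟩
  sets_of_superset := by
    rintro S T ⟨n, Y, hY, hsub⟩ hST
    exact ⟨n, Y, hY, hsub.trans hST⟩
  inter_sets := by
    rintro S T ⟨n, Y, hY, hsub⟩ ⟨n', Y', hY', hsub'⟩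
    refine ⟨max n n', Y ∪ Y', Idl_union hY hY', ?_⟩
    intro x hx
    exact ⟨hsub ⟨Xn_antitone (le_max_left _ _) hx.1, fun h => hx.2 (Or.inl h)⟩,
      hsub' ⟨Xn_antitone (le_max_right _ _) hx.1, fun h => hx.2 (Or.inr h)⟩⟩

lemma myF_infinite {S : Set ℕ} (hS : S ∈ myF) : S.Infinite := by
  obtain ⟨n, Y, hY, hsub⟩ := hS
  exact (core_infinite n hY).mono hsub

instance : myF.NeBot := by
  refine Filter.neBot_iff.2 ?_
  intro h
  have : (∅ : Set ℕ) ∈ myF := by rw [h]; trivial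
  exact (myF_infinite this) (Set.finite_empty)

noncomputable def myU : Ultrafilter ℕ := (Ultrafilter.exists_le myF).choose

lemma myU_le : (myU : Filter ℕ) ≤ myF := (Ultrafilter.exists_le myF).choose_spec

lemma Xn_mem_myU (n : ℕ) : Xn n ∈ myU :=
  myU_le (⟨n, ∅, empty_mem_Idl, by simp⟩ : Xn n ∈ myF)

lemma not_mem_myU_of_Idl {Y : Set ℕ} (hY : Y ∈ Idl) : Y ∉ myU := by
  have : Yᶜ ∈ myU := myU_le (⟨0, Y, hY, fun x hx => hx.2⟩ : Yᶜ ∈ myF)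
  exact Ultrafilter.compl_mem_iff_notMem.1 this

lemma myU_infinite {S : Set ℕ} (hS : S ∈ myU) : S.Infinite := by
  by_contra h
  rw [Set.not_infinite] at h
  exact not_mem_myU_of_Idl (Idl_of_finite h) hS

lemma myU_exists_infinite_inter {S : Set ℕ} (hS : S ∈ myU) : ∃ m, (S ∩ Pm m).Infinite := by
  by_contra h
  push_neg at h
  exact not_mem_myU_of_Idl h hS

-- the family
def YU : Set (Set ℕ) := {s | s ∈ myU}

lemma YU_infinite : ∀ A ∈ YU, A.Infinite := fun _ hA => myU_infinite hA

lemma YU_centered : Centered YU := by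
  intro G hG hGfin _
  have : ⋂₀ G ∈ myU := (Filter.sInter_mem hGfin).2 (fun U hU => hG hU)
  exact myU_infinite this

lemma inter_Pm_finite_of_substar_Xn {S : Set ℕ} (h : ∀ n, (S \ Xn n).Finite) : S ∈ Idl := by
  intro m
  refine (h (m + 1)).subset ?_
  intro x hx
  refine ⟨hx.1, ?_⟩
  intro hc
  have := hx.2
  simp only [Pm, Set.mem_setOf_eq] at this
  simp only [Xn, Set.mem_setOf_eq] at hc
  omega

lemma YU_not_refinable : ¬ LinearlyRefinable YU := by
  rintro ⟨r, hr1, hr2⟩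
  -- Step 1: r y ∈ myU for y ∈ YU
  have step1 : ∀ y ∈ YU, r y ∈ myU := by
    intro y hy
    by_contra hry
    have hcompl : (r y)ᶜ ∈ myU := Ultrafilter.compl_mem_iff_notMem.2 hry
    have hz : ((r y)ᶜ : Set ℕ) ∈ YU := hcompl
    have hdisj : r ((r y)ᶜ) ∩ r y = ∅ := by
      rw [Set.eq_empty_iff_forall_notMem]
      rintro x ⟨h1, h2⟩
      exact (hr1 _ hz).2 h1 h2
    rcases hr2 y hy _ hz with h | h
    · refine (hr1 y hy).1 ?_
      refine h.subset ?_
      intro x hx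
      refine ⟨hx, fun hc => ?_⟩
      rw [Set.eq_empty_iff_forall_notMem] at hdisj
      exact hdisj x ⟨hc, hx⟩
    · refine (hr1 _ hz).1 ?_
      refine h.subset ?_
      intro x hx
      refine ⟨hx, fun hc => ?_⟩
      rw [Set.eq_empty_iff_forall_notMem] at hdisj
      exact hdisj x ⟨hx, hc⟩
  -- Step 2: diagonalize
  set c : ℕ → Set ℕ := fun n => r (Xn n) with hc
  have hcU : ∀ n, c n ∈ myU := fun n => step1 (Xn n) (Xn_mem_myU n)
  have hcsub : ∀ n, c n ⊆ Xn n := fun n => (hr1 (Xn n) (Xn_mem_myU n)).2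
  have hd : ∀ n, (⋂ i ∈ Finset.range (n + 1), c i).Infinite := by
    intro n
    refine myU_infinite ((Filter.biInter_mem (is := ↑(Finset.range (n + 1)))
      (Finset.range (n + 1)).finite_toSet).2 (fun i _ => hcU i))
  obtain ⟨A, hAinf, hAc⟩ := exists_diagonal c hd
  -- Step 3/4
  by_cases hAU : A ∈ myU
  · have hsub : ∀ n, (A \ Xn n).Finite := by
      intro n
      refine (hAc n).subset ?_
      intro x hx
      exact ⟨hx.1, fun hc' => hx.2 (hcsub n hc')⟩
    exact not_mem_myU_of_Idl (inter_Pm_finite_of_substar_Xn hsub) hAU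
  · have hAcomp : (Aᶜ : Set ℕ) ∈ myU := Ultrafilter.compl_mem_iff_notMem.2 hAU
    have hAYU : (Aᶜ : Set ℕ) ∈ YU := hAcomp
    set w : Set ℕ := r Aᶜ with hw
    have hwU : w ∈ myU := step1 _ hAYU
    have hwsub : w ⊆ Aᶜ := (hr1 _ hAYU).2
    by_cases hcase : ∀ n, SubStar w (c n)
    · have hsub : ∀ n, (w \ Xn n).Finite := by
        intro n
        refine ((hcase n).union (subStar_of_subset (hcsub n))).subset ?_
        intro x hx
        by_cases hb : x ∈ c n
        · exact Or.inr ⟨hb, hx.2⟩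
        · exact Or.inl ⟨hx.1, hb⟩
      exact not_mem_myU_of_Idl (inter_Pm_finite_of_substar_Xn hsub) hwU
    · push_neg at hcase
      obtain ⟨n, hn⟩ := hcase
      have hcw : SubStar (c n) w := by
        rcases hr2 _ hAYU _ (Xn_mem_myU n) with h | h
        · exact absurd h hn
        · exact h
      have : (A \ w).Finite := by
        refine ((hAc n).union hcw).subset ?_
        intro x hx
        by_cases hb : x ∈ c n
        · exact Or.inr ⟨hb, hx.2⟩
        · exact Or.inl ⟨hx.1, hb⟩
      refine hAinf ?_
      refine this.subset ?_
      intro x hx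
      exact ⟨hx, fun hc' => hwsub hc' hx⟩

/-- `𝔭 = min{𝔭*, 𝔱}`. -/
theorem p_eq_min_pStar_t : pCard = min pStarCard tCard := by
  set Sp := { c : Cardinal | ∃ F : Set (Set ℕ), (∀ A ∈ F, A.Infinite) ∧ Centered F ∧
    ¬ HasPseudoIntersection F ∧ Cardinal.mk F = c } with hSp
  set St := { c : Cardinal | ∃ F : Set (Set ℕ), (∀ A ∈ F, A.Infinite) ∧
    (∀ A ∈ F, ∀ B ∈ F, SubStar A B ∨ SubStar B A) ∧
    ¬ HasPseudoIntersection F ∧ Cardinal.mk F = c } with hSt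
  set Sps := { c : Cardinal | ∃ Y : Set (Set ℕ), (∀ A ∈ Y, A.Infinite) ∧ Centered Y ∧
    ¬ LinearlyRefinable Y ∧ Cardinal.mk Y = c } with hSps
  have hStSp : St ⊆ Sp := by
    rintro c ⟨F, hinf, hlin, hnpi, hmk⟩
    exact ⟨F, hinf, centered_of_linear F hinf hlin, hnpi, hmk⟩
  have hSpsSp : Sps ⊆ Sp := by
    rintro c ⟨Y, hinf, hcent, hnref, hmk⟩
    exact ⟨Y, hinf, hcent, fun h => hnref (linearlyRefinable_of_psi h), hmk⟩
  have hStne : St.Nonempty := by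
    obtain ⟨T, h1, h2, h3⟩ := exists_tower
    exact ⟨Cardinal.mk T, T, h1, h2, h3, rfl⟩
  have hSpsne : Sps.Nonempty :=
    ⟨Cardinal.mk YU, YU, YU_infinite, YU_centered, YU_not_refinable, rfl⟩
  have hple : pCard ≤ min pStarCard tCard := by
    refine le_min ?_ ?_
    · exact csInf_le_csInf (OrderBot.bddBelow _) hSpsne hSpsSp
    · exact csInf_le_csInf (OrderBot.bddBelow _) hStne hStSp
  refine le_antisymm hple ?_
  have hpmem : pCard ∈ Sp := csInf_mem (hStne.mono hStSp)
  obtain ⟨F, hinf, hcent, hnpi, hmk⟩ := hpmem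
  by_cases href : LinearlyRefinable F
  · obtain ⟨r, hr1, hr2⟩ := href
    have hT : Cardinal.mk (r '' F) ∈ St := by
      refine ⟨r '' F, ?_, ?_, ?_, rfl⟩
      · rintro A ⟨y, hy, rfl⟩
        exact (hr1 y hy).1
      · rintro A ⟨y, hy, rfl⟩ B ⟨z, hz, rfl⟩
        exact hr2 y hy z hz
      · rintro ⟨A, hAinf, hA⟩
        refine hnpi ⟨A, hAinf, ?_⟩
        intro B hB
        exact subStar_trans (hA (r B) ⟨B, hB, rfl⟩) (subStar_of_subset (hr1 B hB).2)
    have : tCard ≤ Cardinal.mk (r '' F) := csInf_le (OrderBot.bddBelow _) hT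
    refine le_trans (min_le_right _ _) (le_trans this ?_)
    rw [← hmk]
    exact Cardinal.mk_image_le
  · have : pStarCard ≤ pCard := csInf_le (OrderBot.bddBelow _) ⟨F, hinf, hcent, href, hmk⟩
    exact le_trans (min_le_left _ _) this
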